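/- arXiv:0912.1252 — 6 statements merged into one kernel-verified Lean document; each statement's English description precedes it below -/
import Mathlib

section
/- Internal dissipation theorem, second-sound theory (Theorem 4.1): Assume the constitutive restrictions of the spatial Coleman–Noll theorem hold: ψ̄ is C¹ and independent of g, η̄ = −∂_θ ψ̄, π̄ = −∂_E ψ̄, ⟨τ̄, H F⁻¹⟩_Frob = ρ⟨∂_F ψ̄, H⟩_Frob for all H, and the reduced dissipation inequality ρθ⟨∂_q ψ̄(s), h(s)⟩ + ⟨q, g⟩ ≤ 0 holds on D. Let t ↦ (F(t), θ(t), E(t), q(t), g(t)) ∈ D be a differentiable path with q̇(t) = h(F(t), θ(t), E(t), q(t), g(t)), and let r(t) (radiant heating) and d(t) (divergence of the heat flux) be functions satisfying the energy balance ρ(t) ε̇(t) = ⟨τ(t), Ḟ(t) F(t)⁻¹⟩_Frob − d(t) + ρ(t)⟨E(t), π̇(t)⟩ + ρ(t) r(t), where ψ(t), η(t), τ(t), π(t) are the constitutive functions evaluated along the path, ε(t) = ψ(t) + θ(t)η(t) + ⟨E(t), π(t)⟩ and ρ(t) = ρ_R/det F(t). Then the internal dissipation δ₀(t) := θ(t)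 η̇(t) − r(t) + d(t)/ρ(t) satisfies δ₀(t) = −⟨∂_q ψ̄(s(t)), q̇(t)⟩ and ρ(t) θ(t) δ₀(t) ≥ ⟨q(t), g(t)⟩. -/
open Matrix

abbrev V3 : Type := Fin 3 → ℝ
abbrev Mat3 : Type := Matrix (Fin 3) (Fin 3) ℝ

noncomputable instance : NormedAddCommGroup Mat3 :=
  inferInstanceAs (NormedAddCommGroup (Fin 3 → Fin 3 → ℝ))
noncomputable instance : NormedSpace ℝ Mat3 :=
  inferInstanceAs (NormedSpace ℝ (Fin 3 → Fin 3 → ℝ))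

/-- The Frobenius inner product `⟨A, B⟩ = tr(Aᵀ B)` of 3×3 matrices. -/
noncomputable def frob (A B : Mat3) : ℝ := (Aᵀ * B).trace

/-- The `j`-th standard basis vector of `ℝ³`. -/
noncomputable def e3 (j : Fin 3) : V3 := Pi.single j 1

/-- A (not necessarily symmetric) matrix is positive definite:
`⟨v, M v⟩ > 0` for all nonzero `v`. -/
def PosDef3 (M : Mat3) : Prop := ∀ v : V3, v ≠ 0 → 0 < v ⬝ᵥ M.mulVec v

/-- A spatial state `(F, θ, E, q, g)`. -/
abbrev St : Type := Mat3 × ℝ × V3 × V3 × V3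

/-- **Internal dissipation theorem, second-sound theory (Theorem 4.1).** -/
theorem internal_dissipation_second_sound
    (ρR : ℝ) (hρR : 0 < ρR)
    (D : Set St) (hD : IsOpen D)
    (hadm : ∀ (F : Mat3) (θ : ℝ) (E q g : V3),
      ((F, θ, E, q, g) : St) ∈ D → 0 < F.det ∧ 0 < θ)
    (ψ η : St → ℝ) (τ : St → Mat3) (π h : St → V3)
    (hψ : ContDiffOn ℝ 1 ψ D) (hη : ContDiffOn ℝ 1 η D)
    (hτ : ContDiffOn ℝ 1 τ D) (hπ : ContDiffOn ℝ 1 π D)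
    (hh : ContDiffOn ℝ 1 h D)
    -- the constitutive restrictions of the spatial Coleman–Noll theorem:
    (hψg : ∀ s ∈ D, ∀ v : V3, fderiv ℝ ψ s (0, 0, 0, 0, v) = 0)
    (hηψ : ∀ s ∈ D, η s = - fderiv ℝ ψ s (0, 1, 0, 0, 0))
    (hπψ : ∀ s ∈ D, ∀ v : V3, π s ⬝ᵥ v = - fderiv ℝ ψ s (0, 0, v, 0, 0))
    (hτψ : ∀ (F : Mat3) (θ : ℝ) (E q g : V3), ((F, θ, E, q, g) : St) ∈ D →
      ∀ H : Mat3,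
        frob (τ (F, θ, E, q, g)) (H * F⁻¹)
          = (ρR / F.det) * fderiv ℝ ψ (F, θ, E, q, g) (H, 0, 0, 0, 0))
    (hred : ∀ (F : Mat3) (θ : ℝ) (E q g : V3), ((F, θ, E, q, g) : St) ∈ D →
      (ρR / F.det) * θ *
          fderiv ℝ ψ (F, θ, E, q, g) (0, 0, 0, h (F, θ, E, q, g), 0)
        + q ⬝ᵥ g ≤ 0)
    -- a differentiable path of states governed by the heat-flux evolution equation:
    (s : ℝ → St) (hs : Differentiable ℝ s) (hsD : ∀ t, s t ∈ D)
    (hq : ∀ t, deriv (fun u => (s u).2.2.2.1) t = h (s t))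
    -- radiant heating and divergence of the heat flux, satisfying the energy balance:
    (r d : ℝ → ℝ)
    (henergy : ∀ t,
      (ρR / ((s t).1).det) *
          deriv (fun u => ψ (s u) + (s u).2.1 * η (s u) + (s u).2.2.1 ⬝ᵥ π (s u)) t
        = frob (τ (s t)) (deriv (fun u => (s u).1) t * ((s t).1)⁻¹)
          - d t
          + (ρR / ((s t).1).det) * ((s t).2.2.1 ⬝ᵥ deriv (fun u => π (s u)) t)
          + (ρR / ((s t).1).det) * r t) :
    ∀ t : ℝ,
      ((s t).2.1 * deriv (fun u => η (s u)) t - r t + d t / (ρR / ((s t).1).det)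
          = - fderiv ℝ ψ (s t) (0, 0, 0, deriv (fun u => (s u).2.2.2.1) t, 0))
      ∧ (ρR / ((s t).1).det) * (s t).2.1 *
            ((s t).2.1 * deriv (fun u => η (s u)) t - r t + d t / (ρR / ((s t).1).det))
          ≥ (s t).2.2.2.1 ⬝ᵥ (s t).2.2.2.2 := by
  intro t
  have hpD := hsD t
  have hnhds : D ∈ nhds (s t) := hD.mem_nhds hpD
  have hsd : HasDerivAt s (deriv s t) t := (hs t).hasDerivAt
  set p := s t with hpdef
  set v := deriv s t with hvdef
  obtain ⟨hdet, hθpos⟩ := hadm p.1 p.2.1 p.2.2.1 p.2.2.2.1 p.2.2.2.2 hpD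
  set ρ := ρR / p.1.det with hρdef
  have hρ : 0 < ρ := div_pos hρR hdet
  have hψd : DifferentiableAt ℝ ψ p :=
    ((hψ.differentiableOn one_ne_zero) p hpD).differentiableAt hnhds
  have hηd : DifferentiableAt ℝ η p :=
    ((hη.differentiableOn one_ne_zero) p hpD).differentiableAt hnhds
  have hπd : DifferentiableAt ℝ π p :=
    ((hπ.differentiableOn one_ne_zero) p hpD).differentiableAt hnhds
  set L := fderiv ℝ ψ p with hLdef
  -- component derivatives of the path
  have hs2 : HasDerivAt (fun u => (s u).2) v.2 t :=
    (ContinuousLinearMap.snd ℝ Mat3 (ℝ × V3 × V3 × V3)).hasFDerivAt.comp_hasDerivAt t hsd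
  have hs22 : HasDerivAt (fun u => (s u).2.2) v.2.2 t :=
    (ContinuousLinearMap.snd ℝ ℝ (V3 × V3 × V3)).hasFDerivAt.comp_hasDerivAt t hs2
  have hs222 : HasDerivAt (fun u => (s u).2.2.2) v.2.2.2 t :=
    (ContinuousLinearMap.snd ℝ V3 (V3 × V3)).hasFDerivAt.comp_hasDerivAt t hs22
  have h1 : HasDerivAt (fun u => (s u).1) v.1 t :=
    (ContinuousLinearMap.fst ℝ Mat3 (ℝ × V3 × V3 × V3)).hasFDerivAt.comp_hasDerivAt t hsd
  have h2 : HasDerivAt (fun u => (s u).2.1) v.2.1 t :=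
    (ContinuousLinearMap.fst ℝ ℝ (V3 × V3 × V3)).hasFDerivAt.comp_hasDerivAt t hs2
  have h3 : HasDerivAt (fun u => (s u).2.2.1) v.2.2.1 t :=
    (ContinuousLinearMap.fst ℝ V3 (V3 × V3)).hasFDerivAt.comp_hasDerivAt t hs22
  have h4 : HasDerivAt (fun u => (s u).2.2.2.1) v.2.2.2.1 t :=
    (ContinuousLinearMap.fst ℝ V3 V3).hasFDerivAt.comp_hasDerivAt t hs222
  -- chain rules
  have hψc : HasDerivAt (fun u => ψ (s u)) (L v) t :=
    hψd.hasFDerivAt.comp_hasDerivAt t hsd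
  have hηc : HasDerivAt (fun u => η (s u)) (fderiv ℝ η p v) t :=
    hηd.hasFDerivAt.comp_hasDerivAt t hsd
  have hπc : HasDerivAt (fun u => π (s u)) (fderiv ℝ π p v) t :=
    hπd.hasFDerivAt.comp_hasDerivAt t hsd
  have hπci : ∀ i : Fin 3, HasDerivAt (fun u => π (s u) i) (fderiv ℝ π p v i) t := fun i =>
    (ContinuousLinearMap.proj i : V3 →L[ℝ] ℝ).hasFDerivAt.comp_hasDerivAt t hπc
  have h3i : ∀ i : Fin 3, HasDerivAt (fun u => (s u).2.2.1 i) (v.2.2.1 i) t := fun i =>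
    (ContinuousLinearMap.proj i : V3 →L[ℝ] ℝ).hasFDerivAt.comp_hasDerivAt t h3
  have hEπ : HasDerivAt (fun u => (s u).2.2.1 ⬝ᵥ π (s u))
      (v.2.2.1 ⬝ᵥ π p + p.2.2.1 ⬝ᵥ fderiv ℝ π p v) t := by
    have hsum := HasDerivAt.sum (u := (Finset.univ : Finset (Fin 3)))
      (fun i _ => (h3i i).mul (hπci i))
    simpa [dotProduct, Finset.sum_add_distrib, Finset.sum_fn, Pi.mul_def] using hsum
  have hθη : HasDerivAt (fun u => (s u).2.1 * η (s u))
      (v.2.1 * η p + p.2.1 * fderiv ℝ η p v) t := h2.mul hηc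
  have hεc : HasDerivAt
      (fun u => ψ (s u) + (s u).2.1 * η (s u) + (s u).2.2.1 ⬝ᵥ π (s u))
      (L v + (v.2.1 * η p + p.2.1 * fderiv ℝ η p v)
        + (v.2.2.1 ⬝ᵥ π p + p.2.2.1 ⬝ᵥ fderiv ℝ π p v)) t :=
    (hψc.add hθη).add hEπ
  -- split L v into its five pieces
  have hvsplit : v = ((v.1, 0, 0, 0, 0) : St) + (0, v.2.1, 0, 0, 0) + (0, 0, v.2.2.1, 0, 0)
      + (0, 0, 0, v.2.2.2.1, 0) + (0, 0, 0, 0, v.2.2.2.2) := by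
    refine Prod.ext ?_ (Prod.ext ?_ (Prod.ext ?_ (Prod.ext ?_ ?_))) <;> simp
  have hLv : L v = L (v.1, 0, 0, 0, 0) + L (0, v.2.1, 0, 0, 0) + L (0, 0, v.2.2.1, 0, 0)
      + L (0, 0, 0, v.2.2.2.1, 0) + L (0, 0, 0, 0, v.2.2.2.2) := by
    conv_lhs => rw [hvsplit]
    simp only [map_add]
  -- identify the five pieces
  have hT1' : frob (τ p) (v.1 * p.1⁻¹) = ρ * L (v.1, 0, 0, 0, 0) :=
    hτψ p.1 p.2.1 p.2.2.1 p.2.2.2.1 p.2.2.2.2 hpD v.1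
  have hT2 : L (0, v.2.1, 0, 0, 0) = -(v.2.1 * η p) := by
    have hsm : ((0, v.2.1, 0, 0, 0) : St) = v.2.1 • ((0, 1, 0, 0, 0) : St) := by
      refine Prod.ext ?_ (Prod.ext ?_ (Prod.ext ?_ (Prod.ext ?_ ?_))) <;> simp
    have hη' := hηψ p hpD
    rw [← hLdef] at hη'
    rw [hsm, L.map_smul, smul_eq_mul, hη']
    ring
  have hT3 : L (0, 0, v.2.2.1, 0, 0) = -(π p ⬝ᵥ v.2.2.1) := by
    have := hπψ p hpD v.2.2.1
    rw [← hLdef] at this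
    linarith [this]
  have hT4 : L (0, 0, 0, 0, v.2.2.2.2) = 0 := by
    have := hψg p hpD v.2.2.2.2
    rw [← hLdef] at this
    exact this
  -- the energy balance along the path
  have hE := henergy t
  rw [← hpdef, ← hρdef, hεc.deriv, h1.deriv, hπc.deriv] at hE
  have hcomm : v.2.2.1 ⬝ᵥ π p = π p ⬝ᵥ v.2.2.1 := dotProduct_comm _ _
  have e1 : ρ * L v = frob (τ p) (v.1 * p.1⁻¹) + ρ * L (0, 0, 0, v.2.2.2.1, 0)
      - ρ * (v.2.1 * η p) - ρ * (π p ⬝ᵥ v.2.2.1) := by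
    rw [hLv, hT2, hT3, hT4, hT1']
    ring
  have hkey : ρ * L (0, 0, 0, v.2.2.2.1, 0) + ρ * (p.2.1 * fderiv ℝ η p v)
      + d t - ρ * r t = 0 := by
    linear_combination hE - e1 - ρ * hcomm
  -- part 1
  have hdiv : d t / ρ = r t - L (0, 0, 0, v.2.2.2.1, 0) - p.2.1 * fderiv ℝ η p v := by
    rw [div_eq_iff hρ.ne']
    linear_combination hkey
  have part1 : p.2.1 * deriv (fun u => η (s u)) t - r t + d t / ρ
      = - fderiv ℝ ψ p (0, 0, 0, deriv (fun u => (s u).2.2.2.1) t, 0) := by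
    rw [hηc.deriv, h4.deriv, ← hLdef, hdiv]
    ring
  refine ⟨part1, ?_⟩
  -- part 2
  have hqeq : v.2.2.2.1 = h p := by
    rw [← h4.deriv, hpdef]
    exact hq t
  have hr' : ρ * p.2.1 * L (0, 0, 0, h p, 0) + p.2.2.2.1 ⬝ᵥ p.2.2.2.2 ≤ 0 :=
    hred p.1 p.2.1 p.2.2.1 p.2.2.2.1 p.2.2.2.2 hpD
  rw [part1, h4.deriv, hqeq, ← hLdef]
  linarith [hr']
end

section
/- Internal energy formula in the Cattaneo theory: In the setting of the Cattaneo theorem, assume K̂ is positive definite, Ẑ := K̂⁻¹T̂ is symmetric, ρ_R ψ̂(F, θ, W, Q) = ρ_R ψ̂₀(F, θ, W) + (1/(2θ)) ⟨Q, Ẑ(F, θ, W) Q⟩ with ψ̂₀(F, θ, W) = ψ̂(F, θ, W, 0), and set η̂ := −∂_θ ψ̂. Then the internal (thermal) energy combination ε̂ := ψ̂ + θ η̂ satisfies ρ_R ε̂(F, θ, W, Q) = ρ_R ε̂₀(F, θ, W) + ⟨Q, Â(F, θ, W) Q⟩, where ε̂₀ := ψ̂₀ − θ ∂_θ ψ̂₀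 and Â := −(θ²/2) ∂_θ ( Ẑ / θ² ). -/
open Matrix

/-- A triple `(F, θ, W)` of deformation gradient, temperature and referential electric field. -/
abbrev Tri : Type := Mat3 × ℝ × V3

/-- A referential state `(F, θ, W, Q)`. -/
abbrev StC : Type := Mat3 × ℝ × V3 × V3

/-- The partial derivative of `ψ̂` with respect to the temperature `θ`. -/
noncomputable def gradθ (ψ : StC → ℝ) (p : StC) : ℝ :=
  fderiv ℝ ψ p (0, 1, 0, 0)

/-- Auxiliary: the derivative of a temperature slice of `ψ` is `gradθ ψ`. -/
lemma slice_hasDerivAt (ψ : StC → ℝ) (U : Set StC) (hU : IsOpen U)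
    (hψ : ContDiffOn ℝ 2 ψ U) (F : Mat3) (θ : ℝ) (W Q : V3)
    (hp : ((F,θ,W,Q) : StC) ∈ U) :
    HasDerivAt (fun t => ψ (F,t,W,Q)) (gradθ ψ (F,θ,W,Q)) θ := by
  have hd : DifferentiableAt ℝ ψ (F,θ,W,Q) :=
    (hψ.contDiffAt (hU.mem_nhds hp)).differentiableAt (by norm_num)
  have hγ : HasDerivAt (fun t : ℝ => ((F,t,W,Q) : StC)) ((0,1,0,0) : StC) θ :=
    HasDerivAt.prodMk (hasDerivAt_const θ F)
      (HasDerivAt.prodMk (hasDerivAt_id θ) (HasDerivAt.prodMk (hasDerivAt_const θ W) (hasDerivAt_const θ Q)))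
  exact hd.hasFDerivAt.comp_hasDerivAt θ hγ

/-- Auxiliary: entries of the inverse of a differentiable matrix curve are differentiable. -/
lemma inv_entry_diff (K : ℝ → Mat3) (θ : ℝ)
    (hKe : ∀ i j, DifferentiableAt ℝ (fun t => K t i j) θ)
    (hdne : (K θ).det ≠ 0) :
    ∀ i j, DifferentiableAt ℝ (fun t => (K t)⁻¹ i j) θ := by
  have hdet : DifferentiableAt ℝ (fun t => (K t).det) θ := by
    simp only [Matrix.det_fin_three]
    exact ((((((hKe 0 0).mul (hKe 1 1)).mul (hKe 2 2)).sub
      (((hKe 0 0).mul (hKe 1 2)).mul (hKe 2 1))).sub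
      (((hKe 0 1).mul (hKe 1 0)).mul (hKe 2 2))).add
      (((hKe 0 1).mul (hKe 1 2)).mul (hKe 2 0))).add
      (((hKe 0 2).mul (hKe 1 0)).mul (hKe 2 1)) |>.sub
      (((hKe 0 2).mul (hKe 1 1)).mul (hKe 2 0))
  have hadj : ∀ i j, DifferentiableAt ℝ (fun t => (K t).adjugate i j) θ := by
    intro i j
    fin_cases i <;> fin_cases j <;>
      simp only [Matrix.adjugate_fin_three, Fin.zero_eta, Fin.mk_one, Matrix.cons_val',
        Matrix.cons_val_zero, Matrix.cons_val_one, Matrix.head_cons, Matrix.empty_val',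
        Matrix.cons_val_fin_one, Matrix.head_fin_const, Fin.reduceFinMk,
        Matrix.cons_val_two, Matrix.tail_cons, Matrix.head_val'] <;>
      first
        | exact ((hKe _ _).mul (hKe _ _)).sub ((hKe _ _).mul (hKe _ _))
        | exact (((hKe _ _).mul (hKe _ _)).neg).add ((hKe _ _).mul (hKe _ _))
  intro i j
  have he : (fun t => (K t)⁻¹ i j)
      = fun t => ((K t).det)⁻¹ * (K t).adjugate i j := by
    funext t
    rw [Matrix.inv_def]
    simp [Ring.inverse_eq_inv']
  rw [he]
  exact (hdet.inv hdne).mul (hadj i j)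

/-- Auxiliary: quadratic form as a double sum. -/
lemma dot_mulVec_sum (Q : V3) (M : Mat3) :
    Q ⬝ᵥ M.mulVec Q = ∑ i, ∑ j, Q i * M i j * Q j := by
  simp [dotProduct, Matrix.mulVec, Finset.mul_sum, mul_assoc]

/-- **Internal energy formula in the Cattaneo theory.** -/
theorem internal_energy_cattaneo
    (ρR : ℝ) (hρR : 0 < ρR)
    (D0 : Set Tri) (hD0 : IsOpen D0)
    (hadm : ∀ (F : Mat3) (θ : ℝ) (W : V3), ((F, θ, W) : Tri) ∈ D0 → 0 < F.det ∧ 0 < θ)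
    (That Khat : Tri → Mat3)
    (hT : ContDiffOn ℝ 1 That D0) (hK : ContDiffOn ℝ 1 Khat D0)
    (hTu : ∀ p ∈ D0, IsUnit (That p)) (hKu : ∀ p ∈ D0, IsUnit (Khat p))
    (ψ : StC → ℝ)
    (hψ : ContDiffOn ℝ 2 ψ {p : StC | ((p.1, p.2.1, p.2.2.1) : Tri) ∈ D0})
    -- the hypotheses of the Cattaneo theorem's characterization:
    (hKpos : ∀ p ∈ D0, PosDef3 (Khat p))
    (hZsym : ∀ p ∈ D0, ((Khat p)⁻¹ * That p)ᵀ = (Khat p)⁻¹ * That p)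
    (hψform : ∀ (F : Mat3) (θ : ℝ) (W : V3), ((F, θ, W) : Tri) ∈ D0 → ∀ Q : V3,
      ρR * ψ (F, θ, W, Q)
        = ρR * ψ (F, θ, W, 0)
          + (1 / (2 * θ)) *
              (Q ⬝ᵥ ((Khat (F, θ, W))⁻¹ * That (F, θ, W)).mulVec Q)) :
    -- conclusion: with η̂ := −∂_θ ψ̂ and ε̂ := ψ̂ + θ η̂,
    -- ρ_R ε̂ = ρ_R ε̂₀ + ⟨Q, Â Q⟩ with ε̂₀ = ψ̂₀ − θ ∂_θ ψ̂₀ and Â = −(θ²/2) ∂_θ (Ẑ/θ²)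
    ∀ (F : Mat3) (θ : ℝ) (W : V3), ((F, θ, W) : Tri) ∈ D0 → ∀ Q : V3,
      ρR * (ψ (F, θ, W, Q) + θ * (- gradθ ψ (F, θ, W, Q)))
        = ρR * (ψ (F, θ, W, 0) - θ * gradθ ψ (F, θ, W, 0))
          + Q ⬝ᵥ (Matrix.of fun i j =>
              -(θ ^ 2 / 2) * deriv
                (fun t : ℝ =>
                  ((Khat (F, t, W))⁻¹ * That (F, t, W)) i j / t ^ 2) θ).mulVec Q := by
  intro F θ W hmem Q
  have hθ : 0 < θ := (hadm F θ W hmem).2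
  -- openness of the state domain
  have hUopen : IsOpen {p : StC | ((p.1, p.2.1, p.2.2.1) : Tri) ∈ D0} := by
    apply hD0.preimage
    fun_prop
  -- the matrix curve and its entries
  have hγ : HasDerivAt (fun t : ℝ => ((F,t,W) : Tri)) ((0,1,0) : Tri) θ :=
    HasDerivAt.prodMk (hasDerivAt_const θ F) (HasDerivAt.prodMk (hasDerivAt_id θ) (hasDerivAt_const θ W))
  have hKc : DifferentiableAt ℝ (fun t => Khat (F,t,W)) θ :=
    ((hK.contDiffAt (hD0.mem_nhds hmem)).differentiableAt (by norm_num)).comp θ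
      hγ.differentiableAt
  have hTc : DifferentiableAt ℝ (fun t => That (F,t,W)) θ :=
    ((hT.contDiffAt (hD0.mem_nhds hmem)).differentiableAt (by norm_num)).comp θ
      hγ.differentiableAt
  have hKe : ∀ i j, DifferentiableAt ℝ (fun t => Khat (F,t,W) i j) θ := fun i j =>
    differentiableAt_pi.mp (differentiableAt_pi.mp hKc i) j
  have hTe : ∀ i j, DifferentiableAt ℝ (fun t => That (F,t,W) i j) θ := fun i j =>
    differentiableAt_pi.mp (differentiableAt_pi.mp hTc i) j
  have hdne : (Khat (F,θ,W)).det ≠ 0 := by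
    have := (Matrix.isUnit_iff_isUnit_det _).mp (hKu _ hmem)
    exact IsUnit.ne_zero this
  have hinv : ∀ i j, DifferentiableAt ℝ (fun t => (Khat (F,t,W))⁻¹ i j) θ :=
    inv_entry_diff (fun t => Khat (F,t,W)) θ hKe hdne
  have hz : ∀ i j, DifferentiableAt ℝ
      (fun t => ((Khat (F,t,W))⁻¹ * That (F,t,W)) i j) θ := by
    intro i j
    simp only [Matrix.mul_apply]
    exact DifferentiableAt.fun_sum fun k _ => (hinv i k).mul (hTe k j)
  -- the quadratic form along the temperature curve
  set Sf : ℝ → ℝ := fun t => ∑ i, ∑ j, Q i * ((Khat (F,t,W))⁻¹ * That (F,t,W)) i j * Q j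
    with hSf
  set τ' : ℝ := ∑ i, ∑ j,
    Q i * deriv (fun t => ((Khat (F,t,W))⁻¹ * That (F,t,W)) i j) θ * Q j with hτ'
  have hS : HasDerivAt Sf τ' θ := by
    rw [hSf, hτ']
    apply HasDerivAt.fun_sum
    intro i _
    apply HasDerivAt.fun_sum
    intro j _
    exact ((hz i j).hasDerivAt.const_mul (Q i)).mul_const (Q j)
  -- the slice derivatives
  have hgQ := slice_hasDerivAt ψ _ hUopen hψ F θ W Q hmem
  have hg0 := slice_hasDerivAt ψ _ hUopen hψ F θ W 0 hmem
  -- eventual equality from the free-energy form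
  have hV : ∀ᶠ t in nhds θ, ((F,t,W) : Tri) ∈ D0 := by
    have hcont : Continuous fun t : ℝ => ((F,t,W) : Tri) := by fun_prop
    exact hcont.continuousAt.preimage_mem_nhds (hD0.mem_nhds hmem)
  have hEq : (fun t => ρR * ψ (F,t,W,Q))
      =ᶠ[nhds θ] fun t => ρR * ψ (F,t,W,0) + (2*t)⁻¹ * Sf t := by
    filter_upwards [hV] with t ht
    rw [hψform F t W ht Q, dot_mulVec_sum, one_div]
  -- derivative of the correction term
  have hinv2t : HasDerivAt (fun t : ℝ => (2*t)⁻¹) (-2/(2*θ)^2) θ := by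
    have := ((hasDerivAt_id θ).const_mul 2).inv (x := θ) (by positivity)
    exact this.congr_deriv (by simp)
  have hc : HasDerivAt (fun t => (2*t)⁻¹ * Sf t)
      (-2/(2*θ)^2 * Sf θ + (2*θ)⁻¹ * τ') θ := hinv2t.mul hS
  have hRfun : HasDerivAt (fun t => ρR * ψ (F,t,W,0) + (2*t)⁻¹ * Sf t)
      (ρR * gradθ ψ (F,θ,W,0) + (-2/(2*θ)^2 * Sf θ + (2*θ)⁻¹ * τ')) θ :=
    (hg0.const_mul ρR).add hc
  have hQval : ρR * gradθ ψ (F,θ,W,Q)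
      = ρR * gradθ ψ (F,θ,W,0) + (-2/(2*θ)^2 * Sf θ + (2*θ)⁻¹ * τ') :=
    (hgQ.const_mul ρR).unique (hRfun.congr_of_eventuallyEq hEq)
  have hψval : ρR * ψ (F,θ,W,Q) = ρR * ψ (F,θ,W,0) + (2*θ)⁻¹ * Sf θ := by
    rw [hψform F θ W hmem Q, dot_mulVec_sum, one_div]
  -- identify the quadratic form with the A-matrix
  have hAQ : Q ⬝ᵥ (Matrix.of fun i j =>
      -(θ ^ 2 / 2) * deriv
        (fun t : ℝ => ((Khat (F, t, W))⁻¹ * That (F, t, W)) i j / t ^ 2) θ).mulVec Q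
      = Sf θ / θ - τ' / 2 := by
    rw [dot_mulVec_sum]
    have hder : ∀ i j, deriv
        (fun t : ℝ => ((Khat (F, t, W))⁻¹ * That (F, t, W)) i j / t ^ 2) θ
        = (deriv (fun t => ((Khat (F,t,W))⁻¹ * That (F,t,W)) i j) θ * θ^2
            - ((Khat (F,θ,W))⁻¹ * That (F,θ,W)) i j * (2 * θ^1)) / (θ^2)^2 := by
      intro i j
      exact ((hz i j).hasDerivAt.div (hasDerivAt_pow 2 θ) (pow_ne_zero 2 hθ.ne')).deriv
    have hterm : ∀ i j,
        Q i * (Matrix.of fun i j =>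
            -(θ ^ 2 / 2) * deriv
              (fun t : ℝ => ((Khat (F, t, W))⁻¹ * That (F, t, W)) i j / t ^ 2) θ) i j * Q j
        = Q i * ((Khat (F,θ,W))⁻¹ * That (F,θ,W)) i j * Q j / θ
          - Q i * deriv (fun t => ((Khat (F,t,W))⁻¹ * That (F,t,W)) i j) θ * Q j / 2 := by
      intro i j
      rw [Matrix.of_apply, hder i j]
      field_simp
      ring
    calc (∑ i, ∑ j, Q i * (Matrix.of fun i j =>
            -(θ ^ 2 / 2) * deriv
              (fun t : ℝ => ((Khat (F, t, W))⁻¹ * That (F, t, W)) i j / t ^ 2) θ) i j * Q j)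
        = ∑ i, ∑ j, (Q i * ((Khat (F,θ,W))⁻¹ * That (F,θ,W)) i j * Q j / θ
            - Q i * deriv (fun t => ((Khat (F,t,W))⁻¹ * That (F,t,W)) i j) θ * Q j / 2) := by
          exact Finset.sum_congr rfl fun i _ => Finset.sum_congr rfl fun j _ => hterm i j
      _ = Sf θ / θ - τ' / 2 := by
          rw [hSf, hτ']
          simp only [Finset.sum_sub_distrib, Finset.sum_div]
  -- conclude by algebra
  rw [hAQ]
  have hexp : ρR * (ψ (F, θ, W, Q) + θ * (- gradθ ψ (F, θ, W, Q)))
      = ρR * ψ (F,θ,W,Q) - θ * (ρR * gradθ ψ (F,θ,W,Q)) := by ring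
  have hexp0 : ρR * (ψ (F, θ, W, 0) - θ * gradθ ψ (F, θ, W, 0))
      = ρR * ψ (F,θ,W,0) - θ * (ρR * gradθ ψ (F,θ,W,0)) := by ring
  rw [hexp, hexp0, hψval, hQval]
  have hθne : θ ≠ 0 := hθ.ne'
  field_simp
  ring
end

section
/- Vanishing of the static heat flux (Theorem 7.2): Let D be an open set of tuples (F, θ, E, g) (F a 3×3 real matrix with det F > 0, θ > 0, E, g ∈ ℝ³) such that (F, θ, E, g) ∈ D implies (F, θ, E, 0) ∈ D, and let q̄ : D → ℝ³ be continuous and satisfy the Fourier inequality ⟨q̄(F, θ, E, g), g⟩ ≤ 0 for all (F, θ, E, g) ∈ D. Then the static heat flux vanishes: q̄(F, θ, E, 0) = 0 for every (F, θ, E, 0) ∈ D. -/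
open Matrix Topology Filter

/-- A state `(F, θ, E, g)` of the usual theory. -/
abbrev St4 : Type := Mat3 × ℝ × V3 × V3

/-- **Vanishing of the static heat flux (Theorem 7.2).** -/
theorem static_heat_flux_vanishes
    (D : Set St4) (hD : IsOpen D)
    (hadm : ∀ (F : Mat3) (θ : ℝ) (E g : V3),
      ((F, θ, E, g) : St4) ∈ D → 0 < F.det ∧ 0 < θ)
    (hD0 : ∀ (F : Mat3) (θ : ℝ) (E g : V3),
      ((F, θ, E, g) : St4) ∈ D → ((F, θ, E, (0 : V3)) : St4) ∈ D)
    (qb : St4 → V3) (hq : ContinuousOn qb D)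
    (hFourier : ∀ (F : Mat3) (θ : ℝ) (E g : V3), ((F, θ, E, g) : St4) ∈ D →
      qb (F, θ, E, g) ⬝ᵥ g ≤ 0) :
    ∀ (F : Mat3) (θ : ℝ) (E : V3), ((F, θ, E, (0 : V3)) : St4) ∈ D →
      qb (F, θ, E, 0) = 0 := by
  intro F θ E hmem
  set s0 : St4 := (F, θ, E, (0 : V3)) with hs0
  have key : ∀ v : V3, qb s0 ⬝ᵥ v ≤ 0 := by
    intro v
    have hf : Continuous (fun t : ℝ => ((F, θ, E, t • v) : St4)) := by
      continuity
    have hU : ∀ᶠ t in 𝓝 (0 : ℝ), ((F, θ, E, t • v) : St4) ∈ D := by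
      have : ((F, θ, E, (0:ℝ) • v) : St4) ∈ D := by simpa using hmem
      exact hf.continuousAt (by exact hD.mem_nhds this)
    have hU' : ∀ᶠ t in 𝓝[>] (0:ℝ), ((F, θ, E, t • v) : St4) ∈ D :=
      nhdsWithin_le_nhds hU
    have htend : Filter.Tendsto (fun t : ℝ => qb (F, θ, E, t • v)) (𝓝[>] 0)
        (𝓝 (qb s0)) := by
      have h1 : Filter.Tendsto (fun t : ℝ => ((F, θ, E, t • v) : St4)) (𝓝[>] 0)
          (𝓝[D] s0) := by
        rw [tendsto_nhdsWithin_iff]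
        constructor
        · simpa using (hf.tendsto 0).mono_left
            (nhdsWithin_le_nhds (s := Set.Ioi (0:ℝ)))
        · exact hU'
      exact (hq s0 hmem).tendsto.comp h1
    have htend2 : Filter.Tendsto (fun t : ℝ => qb (F, θ, E, t • v) ⬝ᵥ v) (𝓝[>] 0)
        (𝓝 (qb s0 ⬝ᵥ v)) := by
      have hcont : Continuous (fun x : V3 => x ⬝ᵥ v) := by
        simp only [dotProduct]
        exact continuous_finset_sum _ fun i _ => (continuous_apply i).mul continuous_const
      exact (hcont.tendsto _).comp htend
    refine le_of_tendsto htend2 ?_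
    filter_upwards [hU', self_mem_nhdsWithin] with t ht htpos
    have hF := hFourier F θ E (t • v) ht
    rw [dotProduct_smul, smul_eq_mul] at hF
    have : (0:ℝ) < t := htpos
    nlinarith [hF]
  have key2 : ∀ v : V3, qb s0 ⬝ᵥ v = 0 := by
    intro v
    have h1 := key v
    have h2 := key (-v)
    rw [dotProduct_neg] at h2
    linarith
  funext j
  have := key2 (Pi.single j 1)
  simpa [dotProduct_single] using this
end

section
/- Vanishing internal dissipation in the usual theory (Theorem 7.4): Assume the constitutive restrictions of the usual theory hold: ψ̄(F, θ, E) is C¹ (independent of g), η̄ = −∂_θ ψ̄, π̄ = −∂_E ψ̄, and ⟨τ̄, H F⁻¹⟩_Frob = ρ⟨∂_F ψ̄, H⟩_Frob for all 3×3 matrices H. Let t ↦ (F(t), θ(t), E(t)) be a differentiable path into the constitutive domain, and let r(t) and d(t) be functions satisfying the energy balance ρ(t) ε̇(t) = ⟨τ(t), Ḟ(t) F(t)⁻¹⟩_Frob − d(t) + ρ(t)⟨E(t), π̇(t)⟩ + ρ(t) r(t), where ψ(t), η(t), τ(t), π(t) are the constitutive functions evaluated along the path, ε(t) = ψ(t)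 + θ(t)η(t) + ⟨E(t), π(t)⟩ and ρ(t) = ρ_R/det F(t). Then the internal dissipation vanishes identically: δ₀(t) := θ(t) η̇(t) − r(t) + d(t)/ρ(t) = 0 for all t. -/
open Matrix

/-- A state `(F, θ, E)` of the usual theory (the constitutive functions do not
depend on the temperature gradient). -/
abbrev St3 : Type := Mat3 × ℝ × V3

/-- **Vanishing internal dissipation in the usual theory (Theorem 7.4).** -/
theorem internal_dissipation_vanishes_usual
    (ρR : ℝ) (hρR : 0 < ρR)
    (D : Set St3) (hD : IsOpen D)
    (hadm : ∀ (F : Mat3) (θ : ℝ) (E : V3),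
      ((F, θ, E) : St3) ∈ D → 0 < F.det ∧ 0 < θ)
    (ψ η : St3 → ℝ) (τ : St3 → Mat3) (π : St3 → V3)
    (hψ : ContDiffOn ℝ 1 ψ D) (hη : ContDiffOn ℝ 1 η D)
    (hτ : ContDiffOn ℝ 1 τ D) (hπ : ContDiffOn ℝ 1 π D)
    -- the constitutive restrictions of the usual theory:
    (hηψ : ∀ s ∈ D, η s = - fderiv ℝ ψ s (0, 1, 0))
    (hπψ : ∀ s ∈ D, ∀ v : V3, π s ⬝ᵥ v = - fderiv ℝ ψ s (0, 0, v))
    (hτψ : ∀ (F : Mat3) (θ : ℝ) (E : V3), ((F, θ, E) : St3) ∈ D →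
      ∀ H : Mat3,
        frob (τ (F, θ, E)) (H * F⁻¹)
          = (ρR / F.det) * fderiv ℝ ψ (F, θ, E) (H, 0, 0))
    -- a differentiable path of states:
    (s : ℝ → St3) (hs : Differentiable ℝ s) (hsD : ∀ t, s t ∈ D)
    -- radiant heating and divergence of the heat flux, satisfying the energy balance:
    (r d : ℝ → ℝ)
    (henergy : ∀ t,
      (ρR / ((s t).1).det) *
          deriv (fun u => ψ (s u) + (s u).2.1 * η (s u) + (s u).2.2 ⬝ᵥ π (s u)) t
        = frob (τ (s t)) (deriv (fun u => (s u).1) t * ((s t).1)⁻¹)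
          - d t
          + (ρR / ((s t).1).det) * ((s t).2.2 ⬝ᵥ deriv (fun u => π (s u)) t)
          + (ρR / ((s t).1).det) * r t) :
    -- conclusion: the internal dissipation vanishes identically
    ∀ t : ℝ,
      (s t).2.1 * deriv (fun u => η (s u)) t - r t + d t / (ρR / ((s t).1).det) = 0 := by

  intro t
  have hmemD : s t ∈ D := hsD t
  obtain ⟨hFdet, hθpos⟩ := hadm (s t).1 (s t).2.1 (s t).2.2 hmemD
  set ρ : ℝ := ρR / ((s t).1).det with hρ
  have hρpos : 0 < ρ := div_pos hρR hFdet
  have hρne : ρ ≠ 0 := ne_of_gt hρpos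
  -- derivative of the path
  have hsd : HasDerivAt s (deriv s t) t := (hs t).hasDerivAt
  set v : St3 := deriv s t with hv
  -- derivatives of the constitutive functions along the path
  have hψat : HasFDerivAt ψ (fderiv ℝ ψ (s t)) (s t) :=
    ((hψ.differentiableOn one_ne_zero).differentiableAt (hD.mem_nhds hmemD)).hasFDerivAt
  have hηat : HasFDerivAt η (fderiv ℝ η (s t)) (s t) :=
    ((hη.differentiableOn one_ne_zero).differentiableAt (hD.mem_nhds hmemD)).hasFDerivAt
  have hπat : HasFDerivAt π (fderiv ℝ π (s t)) (s t) :=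
    ((hπ.differentiableOn one_ne_zero).differentiableAt (hD.mem_nhds hmemD)).hasFDerivAt
  have hψd : HasDerivAt (fun u => ψ (s u)) (fderiv ℝ ψ (s t) v) t :=
    hψat.comp_hasDerivAt t hsd
  have hηd : HasDerivAt (fun u => η (s u)) (fderiv ℝ η (s t) v) t :=
    hηat.comp_hasDerivAt t hsd
  have hπd : HasDerivAt (fun u => π (s u)) (fderiv ℝ π (s t) v) t :=
    hπat.comp_hasDerivAt t hsd
  set b : ℝ := fderiv ℝ η (s t) v with hb
  set a : V3 := fderiv ℝ π (s t) v with ha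
  -- component derivatives
  have hFd : HasDerivAt (fun u => (s u).1) v.1 t := hsd.fst
  have hθd : HasDerivAt (fun u => (s u).2.1) v.2.1 t := hsd.snd.fst
  have hEd : HasDerivAt (fun u => (s u).2.2) v.2.2 t := hsd.snd.snd
  -- product rule for θ * η
  have hmul : HasDerivAt (fun u => (s u).2.1 * η (s u))
      (v.2.1 * η (s t) + (s t).2.1 * b) t := hθd.mul hηd
  -- derivative of the dot product
  have hdot : HasDerivAt (fun u => (s u).2.2 ⬝ᵥ π (s u))
      (v.2.2 ⬝ᵥ π (s t) + (s t).2.2 ⬝ᵥ a) t := by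
    have hsum : HasDerivAt (fun u => ∑ i : Fin 3, (s u).2.2 i * π (s u) i)
        (∑ i : Fin 3, (v.2.2 i * π (s t) i + (s t).2.2 i * a i)) t := by
      apply HasDerivAt.fun_sum
      intro i _
      exact (hasDerivAt_pi.mp hEd i).mul (hasDerivAt_pi.mp hπd i)
    simpa [dotProduct, Finset.sum_add_distrib] using hsum
  have hε : HasDerivAt (fun u => ψ (s u) + (s u).2.1 * η (s u) + (s u).2.2 ⬝ᵥ π (s u))
      (fderiv ℝ ψ (s t) v + (v.2.1 * η (s t) + (s t).2.1 * b)
        + (v.2.2 ⬝ᵥ π (s t) + (s t).2.2 ⬝ᵥ a)) t := (hψd.add hmul).add hdot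
  -- decompose the derivative of ψ
  have hvdec : v = ((v.1, 0, 0) : St3) + ((0, v.2.1, 0) : St3) + ((0, 0, v.2.2) : St3) := by
    simp [Prod.ext_iff]
  have hsmul : ((0, v.2.1, 0) : St3) = v.2.1 • (((0 : Mat3), (1 : ℝ), (0 : V3)) : St3) := by
    simp [Prod.ext_iff]
  have hψsplit : fderiv ℝ ψ (s t) v
      = fderiv ℝ ψ (s t) (v.1, 0, 0) + v.2.1 * fderiv ℝ ψ (s t) (0, 1, 0)
        + fderiv ℝ ψ (s t) (0, 0, v.2.2) := by
    conv_lhs => rw [hvdec]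
    rw [map_add, map_add, hsmul, (fderiv ℝ ψ (s t)).map_smul]
    rfl
  have hηeq : fderiv ℝ ψ (s t) (0, 1, 0) = - η (s t) := by
    have := hηψ (s t) hmemD; linarith
  have hπeq : fderiv ℝ ψ (s t) (0, 0, v.2.2) = - (v.2.2 ⬝ᵥ π (s t)) := by
    have := hπψ (s t) hmemD v.2.2
    rw [dotProduct_comm] at this
    linarith
  have hτeq : frob (τ (s t)) (v.1 * ((s t).1)⁻¹) = ρ * fderiv ℝ ψ (s t) (v.1, 0, 0) := by
    have := hτψ (s t).1 (s t).2.1 (s t).2.2 hmemD v.1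
    simpa using this
  -- plug everything into the energy balance
  have key := henergy t
  rw [hε.deriv, hFd.deriv, hπd.deriv, hτeq] at key
  rw [hψsplit, hηeq, hπeq] at key
  rw [hηd.deriv]
  have hmain : ρ * ((s t).2.1 * b) = - d t + ρ * r t := by rw [hρ] at key ⊢; ring_nf at key ⊢; linarith
  field_simp
  linear_combination hmain
end

section
/- Entropy equality (local reversibility) in the usual theory (Theorem 7.5): Under the same hypotheses as the vanishing internal dissipation theorem — constitutive restrictions η̄ = −∂_θ ψ̄, π̄ = −∂_E ψ̄, ⟨τ̄, H F⁻¹⟩_Frob = ρ⟨∂_F ψ̄, H⟩_Frob for all H, with ψ̄ = ψ̄(F, θ, E) of class C¹; a differentiable path t ↦ (F(t), θ(t), E(t)); and functions r(t), d(t) satisfying the energy balance ρ ε̇ = ⟨τ, Ḟ F⁻¹⟩_Frob − d + ρ⟨E, π̇⟩ + ρ r with ε = ψ + θη + ⟨E, π⟩ — the entropy equality ρ(t) η̇(t) = ρ(t) r(t)/θ(t) − d(t)/θ(t) holds for all t; i.e., every thermo-electroelastic process of the usual theory is locally reversible. -/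
open Matrix

/-- **Entropy equality (local reversibility) in the usual theory (Theorem 7.5).** -/
theorem entropy_equality_usual
    (ρR : ℝ) (hρR : 0 < ρR)
    (D : Set St3) (hD : IsOpen D)
    (hadm : ∀ (F : Mat3) (θ : ℝ) (E : V3),
      ((F, θ, E) : St3) ∈ D → 0 < F.det ∧ 0 < θ)
    (ψ η : St3 → ℝ) (τ : St3 → Mat3) (π : St3 → V3)
    (hψ : ContDiffOn ℝ 1 ψ D) (hη : ContDiffOn ℝ 1 η D)
    (hτ : ContDiffOn ℝ 1 τ D) (hπ : ContDiffOn ℝ 1 π D)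
    -- the constitutive restrictions of the usual theory:
    (hηψ : ∀ s ∈ D, η s = - fderiv ℝ ψ s (0, 1, 0))
    (hπψ : ∀ s ∈ D, ∀ v : V3, π s ⬝ᵥ v = - fderiv ℝ ψ s (0, 0, v))
    (hτψ : ∀ (F : Mat3) (θ : ℝ) (E : V3), ((F, θ, E) : St3) ∈ D →
      ∀ H : Mat3,
        frob (τ (F, θ, E)) (H * F⁻¹)
          = (ρR / F.det) * fderiv ℝ ψ (F, θ, E) (H, 0, 0))
    -- a differentiable path of states:
    (s : ℝ → St3) (hs : Differentiable ℝ s) (hsD : ∀ t, s t ∈ D)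
    -- radiant heating and divergence of the heat flux, satisfying the energy balance:
    (r d : ℝ → ℝ)
    (henergy : ∀ t,
      (ρR / ((s t).1).det) *
          deriv (fun u => ψ (s u) + (s u).2.1 * η (s u) + (s u).2.2 ⬝ᵥ π (s u)) t
        = frob (τ (s t)) (deriv (fun u => (s u).1) t * ((s t).1)⁻¹)
          - d t
          + (ρR / ((s t).1).det) * ((s t).2.2 ⬝ᵥ deriv (fun u => π (s u)) t)
          + (ρR / ((s t).1).det) * r t) :
    -- conclusion: the entropy equality ρ η̇ = ρ r/θ − d/θ
    ∀ t : ℝ,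
      (ρR / ((s t).1).det) * deriv (fun u => η (s u)) t
        = (ρR / ((s t).1).det) * r t / (s t).2.1 - d t / (s t).2.1 := by
  intro t
  have hmem := hsD t
  obtain ⟨hdet, hθpos⟩ := hadm (s t).1 (s t).2.1 (s t).2.2 hmem
  have hψat : DifferentiableAt ℝ ψ (s t) :=
    (hψ.differentiableOn one_ne_zero).differentiableAt (hD.mem_nhds hmem)
  have hηat : DifferentiableAt ℝ η (s t) :=
    (hη.differentiableOn one_ne_zero).differentiableAt (hD.mem_nhds hmem)
  have hπat : DifferentiableAt ℝ π (s t) :=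
    (hπ.differentiableOn one_ne_zero).differentiableAt (hD.mem_nhds hmem)
  have hst : HasDerivAt s (deriv s t) t := (hs t).hasDerivAt
  set p := deriv s t with hp
  have hF : HasDerivAt (fun u => (s u).1) p.1 t := (hasFDerivAt_fst.comp_hasDerivAt t hst :)
  have hS : HasDerivAt (fun u => (s u).2) p.2 t := (hasFDerivAt_snd.comp_hasDerivAt t hst :)
  have hθd : HasDerivAt (fun u => (s u).2.1) p.2.1 t := (hasFDerivAt_fst.comp_hasDerivAt t hS :)
  have hE : HasDerivAt (fun u => (s u).2.2) p.2.2 t := (hasFDerivAt_snd.comp_hasDerivAt t hS :)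
  have hψc : HasDerivAt (fun u => ψ (s u)) (fderiv ℝ ψ (s t) p) t :=
    hψat.hasFDerivAt.comp_hasDerivAt t hst
  have hηc : HasDerivAt (fun u => η (s u)) (fderiv ℝ η (s t) p) t :=
    hηat.hasFDerivAt.comp_hasDerivAt t hst
  have hπc : HasDerivAt (fun u => π (s u)) (fderiv ℝ π (s t) p) t :=
    hπat.hasFDerivAt.comp_hasDerivAt t hst
  set η' := fderiv ℝ η (s t) p with hη'def
  set π' := fderiv ℝ π (s t) p with hπ'def
  have hprod : HasDerivAt (fun u => (s u).2.1 * η (s u))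
      (p.2.1 * η (s t) + (s t).2.1 * η') t := hθd.mul hηc
  have hdot : HasDerivAt (fun u => (s u).2.2 ⬝ᵥ π (s u))
      (p.2.2 ⬝ᵥ π (s t) + (s t).2.2 ⬝ᵥ π') t := by
    have h1 : HasDerivAt (fun u => ∑ i, (s u).2.2 i * π (s u) i)
        (∑ i, (p.2.2 i * π (s t) i + (s t).2.2 i * π' i)) t :=
      HasDerivAt.fun_sum fun i _ =>
        ((hasDerivAt_pi.mp hE) i).mul ((hasDerivAt_pi.mp hπc) i)
    simpa [dotProduct, Finset.sum_add_distrib] using h1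
  have hLHS : deriv (fun u => ψ (s u) + (s u).2.1 * η (s u) + (s u).2.2 ⬝ᵥ π (s u)) t
      = fderiv ℝ ψ (s t) p + (p.2.1 * η (s t) + (s t).2.1 * η')
        + (p.2.2 ⬝ᵥ π (s t) + (s t).2.2 ⬝ᵥ π') :=
    ((hψc.add hprod).add hdot).deriv
  -- decompose the fderiv of ψ along p
  have hdecomp : fderiv ℝ ψ (s t) p
      = fderiv ℝ ψ (s t) (p.1, 0, 0) + p.2.1 * fderiv ℝ ψ (s t) (0, 1, 0)
        + fderiv ℝ ψ (s t) (0, 0, p.2.2) := by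
    have hpeq : p = (p.1, (0:ℝ), (0:V3)) + (((0:Mat3), p.2.1, (0:V3))
        + ((0:Mat3), (0:ℝ), p.2.2)) := by
      refine Prod.ext ?_ (Prod.ext ?_ ?_) <;> simp
    have hsm : ((0:Mat3), p.2.1, (0:V3)) = p.2.1 • ((0:Mat3), (1:ℝ), (0:V3)) := by
      refine Prod.ext ?_ (Prod.ext ?_ ?_) <;> simp
    conv_lhs => rw [hpeq, map_add, map_add, hsm, ContinuousLinearMap.map_smul]
    rw [smul_eq_mul]
    ring
  -- constitutive relations at s t
  have hη1 : η (s t) = - fderiv ℝ ψ (s t) (0, 1, 0) := hηψ _ hmem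
  have hπ1 : π (s t) ⬝ᵥ p.2.2 = - fderiv ℝ ψ (s t) (0, 0, p.2.2) := hπψ _ hmem p.2.2
  have hX : p.2.2 ⬝ᵥ π (s t) = - fderiv ℝ ψ (s t) (0, 0, p.2.2) := by
    rw [dotProduct_comm]; exact hπ1
  have hτ1 : frob (τ (s t)) (p.1 * ((s t).1)⁻¹)
      = (ρR / ((s t).1).det) * fderiv ℝ ψ (s t) (p.1, 0, 0) := by
    have := hτψ (s t).1 (s t).2.1 (s t).2.2 hmem p.1
    simpa only [Prod.mk.eta] using this
  have E1 := henergy t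
  rw [hLHS, hF.deriv, hπc.deriv, hdecomp] at E1
  rw [hηc.deriv]
  have key : (ρR / ((s t).1).det) * ((s t).2.1 * η')
      = (ρR / ((s t).1).det) * r t - d t := by
    linear_combination E1 + hτ1 - ((ρR / ((s t).1).det) * p.2.1) * hη1
      - (ρR / ((s t).1).det) * hX
  have h1 : ((s t).1).det ≠ 0 := ne_of_gt hdet
  have h2 : (s t).2.1 ≠ 0 := ne_of_gt hθpos
  field_simp at key ⊢
  linear_combination key
end

section
/- Piola divergence identity (equation (13) of the paper): Let Ω ⊆ ℝ³ be open and let x : Ω → ℝ³ be a twice continuously differentiable injective map with deformation gradient F(X) = Dx(X) satisfying J(X) := det F(X) > 0 for all X ∈ Ω, and let h : x(Ω) → ℝ³ be continuously differentiable. Define the referential field H(X) := J(X) · F(X)⁻¹ · h(x(X)). Then for every X ∈ Ω, Div H(X) = J(X) · (div h)(x(X)), where Div H(X) is the trace of the Jacobian of H at X and (div h)(y) is the trace of the Jacobian of h at y. -/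
open Matrix

/-- The 3×3 Jacobian matrix of a map `f : ℝ³ → ℝ³` at a point `X`. -/
noncomputable def jac3 (f : V3 → V3) (X : V3) : Mat3 :=
  Matrix.of fun i j => fderiv ℝ f X (e3 j) i

/-- Cyclic formula for the adjugate of a 3×3 matrix. -/
lemma adjugate_cyclic (A : Mat3) (i j : Fin 3) :
    A.adjugate i j = A (j+1) (i+1) * A (j+2) (i+2) - A (j+1) (i+2) * A (j+2) (i+1) := by
  fin_cases i <;> fin_cases j <;> simp [Matrix.adjugate_fin_three] <;> ring

/-- Expansion of a continuous linear map on `ℝ³` over the standard basis. -/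
lemma clm_apply_sum (T : V3 →L[ℝ] V3) (v : V3) (j : Fin 3) :
    T v j = ∑ k, v k * T (e3 k) j := by
  have he : ∀ i : Fin 3, (fun j' => if i = j' then (1:ℝ) else 0) = e3 i := by
    intro i; funext j'; simp [e3, Pi.single_apply, eq_comm]
  conv_lhs => rw [pi_eq_sum_univ v]
  rw [map_sum]
  simp [he, Finset.sum_apply]

/-- **Piola divergence identity (equation (13)).**
For a C² injective deformation `x` with `J = det Dx > 0` and a C¹ spatial field `h`,
the referential field `H = J (Dx)⁻¹ (h ∘ x)` satisfies `Div H = J · (div h) ∘ x`. -/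
theorem piola_divergence_identity
    (Ω : Set V3) (hΩ : IsOpen Ω)
    (x : V3 → V3) (hx : ContDiffOn ℝ 2 x Ω) (hinj : Set.InjOn x Ω)
    (hJ : ∀ X ∈ Ω, 0 < (jac3 x X).det)
    (h : V3 → V3) (hh : ContDiffOn ℝ 1 h (x '' Ω)) :
    ∀ X ∈ Ω,
      (jac3 (fun X' : V3 =>
          (jac3 x X').det • ((jac3 x X')⁻¹).mulVec (h (x X'))) X).trace
        = (jac3 x X).det * (jac3 h (x X)).trace := by
  intro X hX
  have hXn : Ω ∈ nhds X := hΩ.mem_nhds hX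
  have hx2 : ContDiffAt ℝ 2 x X := hx.contDiffAt hXn
  have hdx : DifferentiableAt ℝ x X := hx2.differentiableAt (by norm_num)
  -- the differential of x at X is invertible
  have hMF : LinearMap.toMatrix (Pi.basisFun ℝ (Fin 3)) (Pi.basisFun ℝ (Fin 3))
      (fderiv ℝ x X).toLinearMap = jac3 x X := by
    ext i j; simp [LinearMap.toMatrix_apply, jac3, e3]
  have hdet : IsUnit (LinearMap.toMatrix (Pi.basisFun ℝ (Fin 3)) (Pi.basisFun ℝ (Fin 3))
      (fderiv ℝ x X).toLinearMap).det := by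
    rw [hMF]; exact isUnit_iff_ne_zero.2 (ne_of_gt (hJ X hX))
  let Feq : V3 ≃L[ℝ] V3 := (LinearEquiv.ofIsUnitDet hdet).toContinuousLinearEquiv
  have hFeq : (Feq : V3 →L[ℝ] V3) = fderiv ℝ x X := by
    ext v
    simp [Feq, LinearEquiv.coe_ofIsUnitDet]
  have hstrict : HasStrictFDerivAt x (Feq : V3 →L[ℝ] V3) X := by
    rw [hFeq]; exact hx2.hasStrictFDerivAt (by norm_num)
  -- x '' Ω is a neighborhood of x X, so h is differentiable at x X
  have hmap : Filter.map x (nhds X) = nhds (x X) := hstrict.map_nhds_eq_of_equiv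
  have himg : x '' Ω ∈ nhds (x X) := by
    rw [← hmap, Filter.mem_map]
    exact Filter.mem_of_superset hXn (Set.subset_preimage_image x Ω)
  have hdh : DifferentiableAt ℝ h (x X) :=
    (hh.contDiffAt himg).differentiableAt one_ne_zero
  -- second derivative data
  have hD2 : DifferentiableAt ℝ (fderiv ℝ x) X :=
    ((hx.fderiv_of_isOpen (m := 1) hΩ (by norm_num)).contDiffAt hXn).differentiableAt (by norm_num)
  have hsymm : ∀ v w : V3, fderiv ℝ (fderiv ℝ x) X v w = fderiv ℝ (fderiv ℝ x) X w v :=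
    fun v w => (hx2.isSymmSndFDerivAt (by norm_num)).eq v w
  -- Step A : on Ω, the field equals its adjugate form, written componentwise
  have hptwise : ∀ X' ∈ Ω,
      (jac3 x X').det • ((jac3 x X')⁻¹).mulVec (h (x X'))
        = fun i => ∑ j, (fderiv ℝ x X' (e3 (i+1)) (j+1) * fderiv ℝ x X' (e3 (i+2)) (j+2)
            - fderiv ℝ x X' (e3 (i+2)) (j+1) * fderiv ℝ x X' (e3 (i+1)) (j+2)) * h (x X') j := by
    intro X' hX'
    have h1 : (jac3 x X').det • (jac3 x X')⁻¹ = (jac3 x X').adjugate := by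
      rw [Matrix.inv_def, smul_smul, Ring.inverse_eq_inv,
        mul_inv_cancel₀ (ne_of_gt (hJ X' hX')), one_smul]
    rw [← Matrix.smul_mulVec, h1]
    funext i
    simp only [Matrix.mulVec, dotProduct]
    congr 1; funext j
    rw [adjugate_cyclic]
    simp [jac3]
  have hHeq : (fun X' : V3 => (jac3 x X').det • ((jac3 x X')⁻¹).mulVec (h (x X')))
      =ᶠ[nhds X] (fun X' i => ∑ j, (fderiv ℝ x X' (e3 (i+1)) (j+1) * fderiv ℝ x X' (e3 (i+2)) (j+2)
          - fderiv ℝ x X' (e3 (i+2)) (j+1) * fderiv ℝ x X' (e3 (i+1)) (j+2)) * h (x X') j) :=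
    Filter.eventually_of_mem hXn hptwise
  -- Step B : derivatives of the building blocks
  have hφ : ∀ k l : Fin 3, HasFDerivAt (fun X' => fderiv ℝ x X' (e3 l) k)
      (((ContinuousLinearMap.proj k).comp
        (ContinuousLinearMap.apply ℝ V3 (e3 l))).comp (fderiv ℝ (fderiv ℝ x) X)) X :=
    fun k l => ((ContinuousLinearMap.proj k).comp
        (ContinuousLinearMap.apply ℝ V3 (e3 l))).hasFDerivAt.comp X hD2.hasFDerivAt
  have hg : HasFDerivAt (fun X' => h (x X'))
      ((fderiv ℝ h (x X)).comp (fderiv ℝ x X)) X :=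
    hdh.hasFDerivAt.comp X hdx.hasFDerivAt
  have hgj : ∀ j : Fin 3, HasFDerivAt (fun X' => h (x X') j)
      ((ContinuousLinearMap.proj j).comp ((fderiv ℝ h (x X)).comp (fderiv ℝ x X))) X :=
    fun j => (ContinuousLinearMap.proj j : V3 →L[ℝ] ℝ).hasFDerivAt.comp X hg
  have hterm := fun i j : Fin 3 => ((((hφ (j+1) (i+1)).fun_mul (hφ (j+2) (i+2))).fun_sub
      ((hφ (j+1) (i+2)).fun_mul (hφ (j+2) (i+1)))).fun_mul (hgj j))
  -- value of the derivative of each summand in the direction e3 i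
  have hval : ∀ i j : Fin 3, fderiv ℝ (fun X' =>
      (fderiv ℝ x X' (e3 (i+1)) (j+1) * fderiv ℝ x X' (e3 (i+2)) (j+2)
        - fderiv ℝ x X' (e3 (i+2)) (j+1) * fderiv ℝ x X' (e3 (i+1)) (j+2)) * h (x X') j) X (e3 i)
      = (fderiv ℝ x X (e3 (i+1)) (j+1) * fderiv ℝ x X (e3 (i+2)) (j+2)
        - fderiv ℝ x X (e3 (i+2)) (j+1) * fderiv ℝ x X (e3 (i+1)) (j+2))
          * fderiv ℝ h (x X) (fderiv ℝ x X (e3 i)) j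
        + h (x X) j *
          (fderiv ℝ x X (e3 (i+1)) (j+1) * fderiv ℝ (fderiv ℝ x) X (e3 i) (e3 (i+2)) (j+2)
           + fderiv ℝ x X (e3 (i+2)) (j+2) * fderiv ℝ (fderiv ℝ x) X (e3 i) (e3 (i+1)) (j+1)
           - (fderiv ℝ x X (e3 (i+2)) (j+1) * fderiv ℝ (fderiv ℝ x) X (e3 i) (e3 (i+1)) (j+2)
              + fderiv ℝ x X (e3 (i+1)) (j+2) * fderiv ℝ (fderiv ℝ x) X (e3 i) (e3 (i+2)) (j+1))) := by
    intro i j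
    rw [(hterm i j).fderiv]
    simp [ContinuousLinearMap.add_apply, ContinuousLinearMap.smul_apply,
      ContinuousLinearMap.sub_apply, ContinuousLinearMap.comp_apply,
      ContinuousLinearMap.proj_apply, ContinuousLinearMap.apply_apply, smul_eq_mul]
  -- differentiability of components
  have hdiffc : ∀ i : Fin 3, DifferentiableAt ℝ (fun X' =>
      ∑ j, (fderiv ℝ x X' (e3 (i+1)) (j+1) * fderiv ℝ x X' (e3 (i+2)) (j+2)
        - fderiv ℝ x X' (e3 (i+2)) (j+1) * fderiv ℝ x X' (e3 (i+1)) (j+2)) * h (x X') j) X :=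
    fun i => (HasFDerivAt.sum (fun j (_ : j ∈ Finset.univ) => hterm i j)).differentiableAt
  -- reduce the divergence to a sum of scalar derivatives
  have hfe : jac3 (fun X' : V3 => (jac3 x X').det • ((jac3 x X')⁻¹).mulVec (h (x X'))) X
      = jac3 (fun X' i => ∑ j, (fderiv ℝ x X' (e3 (i+1)) (j+1) * fderiv ℝ x X' (e3 (i+2)) (j+2)
          - fderiv ℝ x X' (e3 (i+2)) (j+1) * fderiv ℝ x X' (e3 (i+1)) (j+2)) * h (x X') j) X := by
    have hfd := Filter.EventuallyEq.fderiv_eq (𝕜 := ℝ) hHeq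
    show Matrix.of (fun i j => fderiv ℝ (fun X' : V3 =>
        (jac3 x X').det • ((jac3 x X')⁻¹).mulVec (h (x X'))) X (e3 j) i) = _
    rw [hfd]
    rfl
  rw [hfe]
  have htr : (jac3 (fun X' i => ∑ j, (fderiv ℝ x X' (e3 (i+1)) (j+1) * fderiv ℝ x X' (e3 (i+2)) (j+2)
      - fderiv ℝ x X' (e3 (i+2)) (j+1) * fderiv ℝ x X' (e3 (i+1)) (j+2)) * h (x X') j) X).trace
      = ∑ i : Fin 3, ∑ j : Fin 3, fderiv ℝ (fun X' =>
          (fderiv ℝ x X' (e3 (i+1)) (j+1) * fderiv ℝ x X' (e3 (i+2)) (j+2)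
            - fderiv ℝ x X' (e3 (i+2)) (j+1) * fderiv ℝ x X' (e3 (i+1)) (j+2)) * h (x X') j) X (e3 i) := by
    have h1 : (jac3 (fun X' i => ∑ j, (fderiv ℝ x X' (e3 (i+1)) (j+1) * fderiv ℝ x X' (e3 (i+2)) (j+2)
        - fderiv ℝ x X' (e3 (i+2)) (j+1) * fderiv ℝ x X' (e3 (i+1)) (j+2)) * h (x X') j) X).trace
        = ∑ i : Fin 3, fderiv ℝ (fun X' i => ∑ j, (fderiv ℝ x X' (e3 (i+1)) (j+1) * fderiv ℝ x X' (e3 (i+2)) (j+2)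
            - fderiv ℝ x X' (e3 (i+2)) (j+1) * fderiv ℝ x X' (e3 (i+1)) (j+2)) * h (x X') j) X (e3 i) i := by
      simp [jac3, Matrix.trace, Matrix.diag]
    rw [h1, fderiv_pi hdiffc]
    refine Finset.sum_congr rfl (fun i _ => ?_)
    rw [ContinuousLinearMap.pi_apply,
      fderiv_fun_sum (fun j _ => (hterm i j).differentiableAt),
      ContinuousLinearMap.sum_apply]
  rw [htr]
  -- evaluate all derivatives
  have hFv : ∀ i j : Fin 3, fderiv ℝ h (x X) (fderiv ℝ x X (e3 i)) j
      = ∑ k, fderiv ℝ x X (e3 i) k * fderiv ℝ h (x X) (e3 k) j :=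
    fun i j => clm_apply_sum _ _ _
  have hS10 : ∀ c : Fin 3, fderiv ℝ (fderiv ℝ x) X (e3 1) (e3 0) c
      = fderiv ℝ (fderiv ℝ x) X (e3 0) (e3 1) c := fun c => congrFun (hsymm (e3 1) (e3 0)) c
  have hS20 : ∀ c : Fin 3, fderiv ℝ (fderiv ℝ x) X (e3 2) (e3 0) c
      = fderiv ℝ (fderiv ℝ x) X (e3 0) (e3 2) c := fun c => congrFun (hsymm (e3 2) (e3 0)) c
  have hS21 : ∀ c : Fin 3, fderiv ℝ (fderiv ℝ x) X (e3 2) (e3 1) c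
      = fderiv ℝ (fderiv ℝ x) X (e3 1) (e3 2) c := fun c => congrFun (hsymm (e3 2) (e3 1)) c
  simp only [Finset.sum_congr, hval, hFv]
  simp only [Fin.sum_univ_three]
  simp only [jac3, Matrix.det_fin_three, Matrix.trace_fin_three, Matrix.of_apply]
  simp only [Fin.reduceAdd]
  simp only [hS10, hS20, hS21]
  ring
end
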